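/- Let X¹,...,X^N be i.i.d. samples from a discrete graphical model that factors according to a junction tree with cliques 𝒞 and separators 𝒮, and let n be the vector of clique and separator counts. Then for cliques/separators A and B separated by separator S in the junction tree, n_A and n_B are conditionally independent given n_S. -/

import Mathlib

open MeasureTheory ProbabilityTheory

open Classical in
/-- The count vector of a set `A` of vertices: `cgmCount X A ω i_A` is the number of
individuals `m` whose configuration restricted to `A` equals `i_A`. -/
noncomputable def cgmCount {Ω V 𝒳 : Type*} {N : ℕ} (X : Fin N → Ω → V → 𝒳)
    (A : Finset V) (ω : Ω) (iA : A → 𝒳) : ℕ :=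
  (Finset.univ.filter fun m : Fin N =>
    ∀ v : A, X m ω v = iA v).card

/-! ### Auxiliary combinatorial machinery -/

section Counts
open Classical
variable {N : ℕ}

/-- Restriction of a configuration to a finite set of vertices. -/
def cgmRes {V 𝒳 : Type*} (U : Finset V) (x : V → 𝒳) : U → 𝒳 := fun v => x v

/-- Count vector of a finite sequence. -/
noncomputable def cgmCnt {β : Type*} (s : Fin N → β) : β → ℕ :=
  fun v => (Finset.univ.filter fun m => s m = v).card

lemma cgmCnt_comp_perm {β : Type*} (σ : Equiv.Perm (Fin N)) (s : Fin N → β) :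
    cgmCnt (fun m => s (σ m)) = cgmCnt s := by
  funext v
  unfold cgmCnt
  apply Finset.card_bij' (fun m _ => σ m) (fun m _ => σ.symm m) <;> simp

lemma perm_of_cgmCnt_eq {β : Type*} [Fintype β] {s s' : Fin N → β}
    (h : cgmCnt s = cgmCnt s') : ∃ σ : Equiv.Perm (Fin N), ∀ m, s (σ m) = s' m := by
  have e : ∀ c : β, { m // s' m = c } ≃ { m // s m = c } := by
    intro c
    apply Fintype.equivOfCardEq
    rw [Fintype.card_subtype, Fintype.card_subtype]
    exact (congrFun h c).symm
  exact ⟨Equiv.ofFiberEquiv e, fun m => Equiv.ofFiberEquiv_map e m⟩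

/-- A fixed permutation matching two sequences with equal count vectors. -/
noncomputable def cgmSig {β : Type*} [Fintype β] (s s' : Fin N → β) : Equiv.Perm (Fin N) :=
  if h : cgmCnt s = cgmCnt s' then (perm_of_cgmCnt_eq h).choose else 1

lemma cgmSig_spec {β : Type*} [Fintype β] {s s' : Fin N → β}
    (h : cgmCnt s = cgmCnt s') : ∀ m, s (cgmSig s s' m) = s' m := by
  rw [cgmSig, dif_pos h]
  exact (perm_of_cgmCnt_eq h).choose_spec

open Classical in
lemma cgmCount_eq_cnt {Ω V 𝒳 : Type*} {N : ℕ} (X : Fin N → Ω → V → 𝒳) (A : Finset V) (ω : Ω) :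
    cgmCount X A ω = cgmCnt (fun m => cgmRes A (X m ω)) := by
  funext iA
  unfold cgmCount cgmCnt
  apply congrArg Finset.card
  ext m
  simp only [Finset.mem_filter, Finset.mem_univ, true_and]
  exact (funext_iff (f := cgmRes A (X m ω)) (g := iA)).symm

/-- Gluing two matrices along a vertex split, with a row permutation on the second part. -/
noncomputable def cgmGlue {V 𝒳 : Type*} {N : ℕ} (U : Finset V) (σ : Equiv.Perm (Fin N))
    (y y' : Fin N → V → 𝒳) : Fin N → V → 𝒳 :=
  fun m v => if v ∈ U then y m v else y' (σ m) v

lemma cgmRes_glue_left {V 𝒳 : Type*} {N : ℕ} {U D : Finset V} (hD : D ⊆ U)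
    (σ : Equiv.Perm (Fin N)) (y y' : Fin N → V → 𝒳) (m : Fin N) :
    cgmRes D (cgmGlue U σ y y' m) = cgmRes D (y m) := by
  funext v
  show (if (v : V) ∈ U then y m v else y' (σ m) v) = y m v
  rw [if_pos (hD v.2)]

lemma cgmRes_glue_right {V 𝒳 : Type*} {N : ℕ} {U W S D : Finset V}
    (hUW : U ∩ W ⊆ S) (hD : D ⊆ W)
    (σ : Equiv.Perm (Fin N)) {y y' : Fin N → V → 𝒳} (m : Fin N)
    (hagree : ∀ v ∈ S, y m v = y' (σ m) v) :
    cgmRes D (cgmGlue U σ y y' m) = cgmRes D (y' (σ m)) := by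
  funext v
  show (if (v : V) ∈ U then y m v else y' (σ m) v) = y' (σ m) v
  by_cases h : (v : V) ∈ U
  · rw [if_pos h]
    exact hagree v (hUW (Finset.mem_inter.mpr ⟨h, hD v.2⟩))
  · rw [if_neg h]

end Counts

lemma cgm_ite_mul1 (P : Prop) [Decidable P] (x : ENNReal) :
    (if P then x else 0) = (if P then 1 else 0) * x := by
  split <;> simp

lemma cgm_ite_mul2 (P Q : Prop) [Decidable P] [Decidable Q] (x : ENNReal) :
    (if P ∧ Q then x else 0) = (if P then 1 else 0) * ((if Q then 1 else 0) * x) := by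
  by_cases hP : P <;> by_cases hQ : Q <;> simp [hP, hQ]

lemma cgm_ite_mul3 (P Q R : Prop) [Decidable P] [Decidable Q] [Decidable R] (x : ENNReal) :
    (if P ∧ Q ∧ R then x else 0) =
      (if P then 1 else 0) * ((if Q then 1 else 0) * ((if R then 1 else 0) * x)) := by
  by_cases hP : P <;> by_cases hQ : Q <;> by_cases hR : R <;> simp [hP, hQ, hR]

lemma cgm_sum_mul_sum_eq {α : Type*} [Fintype α] (L1 L2 R1 R2 : α → ENNReal)
    (Θ : α × α → α × α) (hinv : ∀ p, Θ (Θ p) = p)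
    (h : ∀ p : α × α, L1 (Θ p).1 * L2 (Θ p).2 = R1 p.1 * R2 p.2) :
    (∑ y, L1 y) * (∑ y, L2 y) = (∑ y, R1 y) * (∑ y, R2 y) := by
  have hL : (∑ y, L1 y) * (∑ y, L2 y) = ∑ p : α × α, L1 p.1 * L2 p.2 := by
    rw [Finset.sum_mul_sum, ← Finset.sum_product', Finset.univ_product_univ]
  have hR : (∑ y, R1 y) * (∑ y, R2 y) = ∑ p : α × α, R1 p.1 * R2 p.2 := by
    rw [Finset.sum_mul_sum, ← Finset.sum_product', Finset.univ_product_univ]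
  rw [hL, hR]
  exact Fintype.sum_equiv (Function.Involutive.toPerm Θ hinv) _ _
    (fun p => by have := h (Θ p); rw [hinv p] at this; simpa [Function.Involutive.toPerm] using this)

/-! ### The law of the sample as a finite sum -/

open Classical in
lemma cgm_meas_eq {Ω V 𝒳 : Type*} [MeasurableSpace Ω] [Fintype V] [Fintype 𝒳]
    [MeasurableSpace 𝒳] [MeasurableSingletonClass 𝒳]
    (μ : Measure Ω) {N : ℕ} (X : Fin N → Ω → V → 𝒳)
    (hXmeas : ∀ m, Measurable (X m))
    (hindep : iIndepFun X μ)
    (Q : (Fin N → V → 𝒳) → Prop) :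
    μ {ω | Q (fun m => X m ω)} =
      ∑ y : Fin N → V → 𝒳, if Q y then ∏ m, μ ((X m) ⁻¹' {y m}) else 0 := by
  have hsingle : ∀ y : Fin N → V → 𝒳,
      μ {ω | (fun m => X m ω) = y} = ∏ m, μ ((X m) ⁻¹' {y m}) := by
    intro y
    have h := hindep.measure_inter_preimage_eq_mul Finset.univ
      (sets := fun m => {y m}) (fun i _ => measurableSet_singleton _)
    simp only [Finset.mem_univ, Set.iInter_true, Finset.prod_const] at h
    rw [← h]
    · congr 1
      ext ω
      simp [funext_iff, Set.mem_iInter]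
  have hset : {ω | Q (fun m => X m ω)} =
      ⋃ y ∈ Finset.univ.filter (fun y : Fin N → V → 𝒳 => Q y),
        {ω | (fun m => X m ω) = y} := by
    ext ω
    simp only [Set.mem_setOf_eq, Set.mem_iUnion, Finset.mem_filter, Finset.mem_univ, true_and]
    constructor
    · intro h
      exact ⟨fun m => X m ω, h, rfl⟩
    · rintro ⟨y, hQ, hy⟩
      rw [hy]; exact hQ
  rw [hset, measure_biUnion_finset]
  · rw [Finset.sum_filter]
    exact Finset.sum_congr rfl fun y _ => by split <;> simp [hsingle y]
  · intro y hy z hz hyz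
    simp only [Function.onFun, Set.disjoint_left]
    intro ω h1 h2
    exact hyz (h1.symm.trans h2)
  · intro y hy
    have : {ω | (fun m => X m ω) = y} = ⋂ m, (X m) ⁻¹' {y m} := by
      ext ω; simp [funext_iff]
    rw [this]
    exact MeasurableSet.iInter fun m => (hXmeas m) (measurableSet_singleton _)

/-! ### The junction tree split -/

section Tree
variable {ι : Type*} {T : SimpleGraph ι}

lemma cgm_reach_iff (e : Sym2 ι) {x y : ι} :
    (T.deleteEdges {e}).Reachable x y ↔ ∃ w : T.Walk x y, e ∉ w.edges := by
  constructor
  · rintro ⟨p⟩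
    refine ⟨p.map (SimpleGraph.Hom.ofLE (T.deleteEdges_le (s := {e}))), ?_⟩
    rw [SimpleGraph.Walk.edges_map]
    simp_rw [List.mem_map, SimpleGraph.Hom.ofLE_apply, Sym2.map_id', id]
    rintro ⟨e', he', rfl⟩
    have hmem := p.edges_subset_edgeSet he'
    rw [SimpleGraph.edgeSet_deleteEdges] at hmem
    exact hmem.2 rfl
  · rintro ⟨w, hw⟩
    exact ⟨w.toDeleteEdges {e} (fun e' he' => by
      rintro rfl; exact hw he')⟩

lemma cgm_walk_split (i₀ j₀ : ι) :
    ∀ {x y : ι} (w : T.Walk x y),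
      (T.deleteEdges {s(i₀, j₀)}).Reachable x y ∨
      (T.deleteEdges {s(i₀, j₀)}).Reachable x i₀ ∨
      (T.deleteEdges {s(i₀, j₀)}).Reachable x j₀ := by
  intro x y w
  induction w with
  | nil => exact Or.inl (SimpleGraph.Reachable.refl _)
  | @cons x z y h p ih =>
    by_cases hc : s(x, z) = s(i₀, j₀)
    · rcases Sym2.eq_iff.mp hc with ⟨rfl, rfl⟩ | ⟨rfl, rfl⟩
      · exact Or.inr (Or.inl (SimpleGraph.Reachable.refl _))
      · exact Or.inr (Or.inr (SimpleGraph.Reachable.refl _))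
    · have hadj : (T.deleteEdges {s(i₀, j₀)}).Adj x z := by
        rw [SimpleGraph.deleteEdges_adj]
        exact ⟨h, by simpa using hc⟩
      rcases ih with h' | h' | h'
      · exact Or.inl (hadj.reachable.trans h')
      · exact Or.inr (Or.inl (hadj.reachable.trans h'))
      · exact Or.inr (Or.inr (hadj.reachable.trans h'))
end Tree

open Classical in
lemma cgm_split_aux {V 𝒳 ι : Type*} [Fintype V] [Fintype 𝒳] [Fintype ι]
    (T : SimpleGraph ι) (hT : T.IsTree) (C : ι → Finset V)
    (hJT : ∀ (i j : ι) (w : T.Walk i j), w.IsPath → ∀ k ∈ w.support, C i ∩ C j ⊆ C k)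
    (φ : (i : ι) → ((C i) → 𝒳) → ENNReal)
    (a b i₀ j₀ : ι) (hedge : T.Adj i₀ j₀)
    (hsep : ∀ w : T.Walk a b, s(i₀, j₀) ∈ w.edges)
    (hra : (T.deleteEdges {s(i₀, j₀)}).Reachable a i₀) :
    ∃ (U W : Finset V) (f : ({v // v ∈ U} → 𝒳) → ENNReal)
      (g : ({v // v ∈ W} → 𝒳) → ENNReal),
      C a ⊆ U ∧ C b ⊆ W ∧ (C i₀ ∩ C j₀) ⊆ U ∧ (C i₀ ∩ C j₀) ⊆ W ∧
      (U ∩ W ⊆ C i₀ ∩ C j₀) ∧ (U ∪ W = Finset.univ) ∧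
      ∀ x : V → 𝒳, (∏ i, φ i (fun v => x v)) = f (fun v => x v.1) * g (fun v => x v.1) := by
  set T' := T.deleteEdges {s(i₀, j₀)} with hT'
  have hbridge : ¬ T'.Reachable i₀ j₀ := by
    have hacyc := SimpleGraph.isAcyclic_iff_forall_edge_isBridge.mp hT.IsAcyclic
    have hb := hacyc ((SimpleGraph.mem_edgeSet T).mpr hedge)
    rw [SimpleGraph.isBridge_iff] at hb
    exact hb
  have hnab : ¬ T'.Reachable a b := by
    intro h
    obtain ⟨w, hw⟩ := (cgm_reach_iff _).mp h
    exact hw (hsep w)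
  set IF : Finset ι := Finset.univ.filter (fun i => T'.Reachable a i) with hIF
  have hmemIF : ∀ i, i ∈ IF ↔ T'.Reachable a i := by
    intro i; simp [hIF]
  have haIF : a ∈ IF := (hmemIF a).mpr (SimpleGraph.Reachable.refl _)
  have hi₀IF : i₀ ∈ IF := (hmemIF i₀).mpr hra
  have hj₀IF : j₀ ∉ IF := by
    intro h
    exact hbridge (hra.symm.trans ((hmemIF j₀).mp h))
  have hbIF : b ∉ IF := fun h => hnab ((hmemIF b).mp h)
  set U : Finset V := IF.biUnion C with hU
  set W : Finset V := (Finset.univ \ U) ∪ (Finset.univ \ IF).biUnion C with hW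
  have hCU : ∀ i ∈ IF, C i ⊆ U := fun i hi v hv => Finset.mem_biUnion.mpr ⟨i, hi, hv⟩
  have hCW : ∀ i, i ∉ IF → C i ⊆ W := fun i hi v hv =>
    Finset.mem_union_right _ (Finset.mem_biUnion.mpr ⟨i, by simp [hi], hv⟩)
  have hUW : U ∩ W ⊆ C i₀ ∩ C j₀ := by
    intro v hv
    obtain ⟨hvU, hvW⟩ := Finset.mem_inter.mp hv
    obtain ⟨i, hiIF, hvi⟩ := Finset.mem_biUnion.mp hvU
    rcases Finset.mem_union.mp hvW with hv1 | hv2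
    · exact absurd hvU (Finset.mem_sdiff.mp hv1).2
    · obtain ⟨j, hjIF, hvj⟩ := Finset.mem_biUnion.mp hv2
      have hjIF' : j ∉ IF := by simpa using hjIF
      obtain ⟨w⟩ := hT.isConnected.preconnected i j
      set q := w.toPath with hq
      have he : s(i₀, j₀) ∈ (q : T.Walk i j).edges := by
        by_contra hne
        have : T'.Reachable i j := (cgm_reach_iff _).mpr ⟨q, hne⟩
        exact hjIF' ((hmemIF j).mpr (((hmemIF i).mp hiIF).trans this))
      have hi₀s : i₀ ∈ (q : T.Walk i j).support :=
        SimpleGraph.Walk.fst_mem_support_of_mem_edges _ he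
      have hj₀s : j₀ ∈ (q : T.Walk i j).support :=
        SimpleGraph.Walk.snd_mem_support_of_mem_edges _ he
      have h1 := hJT i j q q.2 i₀ hi₀s
      have h2 := hJT i j q q.2 j₀ hj₀s
      have hvij : v ∈ C i ∩ C j := Finset.mem_inter.mpr ⟨hvi, hvj⟩
      exact Finset.mem_inter.mpr ⟨h1 hvij, h2 hvij⟩
  refine ⟨U, W,
    (fun z => ∏ i, if h : i ∈ IF then φ i (fun v => z ⟨v.1, hCU i h v.2⟩) else 1),
    (fun z => ∏ i, if h : i ∉ IF then φ i (fun v => z ⟨v.1, hCW i h v.2⟩) else 1),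
    hCU a haIF, hCW b hbIF,
    Finset.Subset.trans Finset.inter_subset_left (hCU i₀ hi₀IF),
    Finset.Subset.trans Finset.inter_subset_right (hCW j₀ hj₀IF),
    hUW, ?_, ?_⟩
  · apply Finset.eq_univ_of_forall
    intro v
    by_cases h : v ∈ U
    · exact Finset.mem_union_left _ h
    · exact Finset.mem_union_right _ (Finset.mem_union_left _ (by simp [h]))
  · intro x
    rw [← Finset.prod_mul_distrib]
    apply Finset.prod_congr rfl
    intro i _
    by_cases h : i ∈ IF <;> simp [h]

open Classical in
lemma cgm_split {V 𝒳 ι : Type*} [Fintype V] [Fintype 𝒳] [Fintype ι]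
    (T : SimpleGraph ι) (hT : T.IsTree) (C : ι → Finset V)
    (hJT : ∀ (i j : ι) (w : T.Walk i j), w.IsPath → ∀ k ∈ w.support, C i ∩ C j ⊆ C k)
    (φ : (i : ι) → ((C i) → 𝒳) → ENNReal)
    (a b i₀ j₀ : ι) (hedge : T.Adj i₀ j₀)
    (hsep : ∀ w : T.Walk a b, s(i₀, j₀) ∈ w.edges) :
    ∃ (U W : Finset V) (f : ({v // v ∈ U} → 𝒳) → ENNReal)
      (g : ({v // v ∈ W} → 𝒳) → ENNReal),
      C a ⊆ U ∧ C b ⊆ W ∧ (C i₀ ∩ C j₀) ⊆ U ∧ (C i₀ ∩ C j₀) ⊆ W ∧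
      (U ∩ W ⊆ C i₀ ∩ C j₀) ∧ (U ∪ W = Finset.univ) ∧
      ∀ x : V → 𝒳, (∏ i, φ i (fun v => x v)) = f (fun v => x v.1) * g (fun v => x v.1) := by
  have key : (T.deleteEdges {s(i₀, j₀)}).Reachable a i₀ ∨
      (T.deleteEdges {s(i₀, j₀)}).Reachable a j₀ := by
    obtain ⟨w⟩ := hT.isConnected.preconnected a b
    rcases cgm_walk_split i₀ j₀ w with h | h | h
    · exact absurd h (fun h' => by
        obtain ⟨w', hw'⟩ := (cgm_reach_iff _).mp h'
        exact hw' (hsep w'))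
    · exact Or.inl h
    · exact Or.inr h
  rcases key with h | h
  · exact cgm_split_aux T hT C hJT φ a b i₀ j₀ hedge hsep h
  · have hswap : s(j₀, i₀) = s(i₀, j₀) := Sym2.eq_swap
    obtain ⟨U, W, f, g, h1, h2, h3, h4, h5, h6, h7⟩ :=
      cgm_split_aux T hT C hJT φ a b j₀ i₀ hedge.symm
        (fun w => by rw [hswap]; exact hsep w) (by rw [hswap]; exact h)
    rw [Finset.inter_comm (C j₀)] at h3 h4 h5
    exact ⟨U, W, f, g, h1, h2, h3, h4, h5, h6, h7⟩

open Classical in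
/-- CGM conditional independence: for i.i.d. samples from a discrete graphical model
factoring over a junction tree `T` with cliques `C i`, if every path in `T` between
the home cliques of `A` and `B` crosses the edge `{i₀, j₀}` with separator
`S = C i₀ ∩ C j₀`, then the counts `n_A` and `n_B` are conditionally independent
given `n_S` (stated via factorization of the joint pmf). -/
theorem cgm_counts_condIndep
    {Ω V 𝒳 ι : Type*} [MeasurableSpace Ω] [Fintype V] [Fintype 𝒳] [Fintype ι]
    [MeasurableSpace 𝒳] [MeasurableSingletonClass 𝒳]
    (μ : Measure Ω) [IsProbabilityMeasure μ]
    (T : SimpleGraph ι) (hT : T.IsTree) (C : ι → Finset V)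
    -- junction tree (running intersection) property
    (hJT : ∀ (i j : ι) (w : T.Walk i j), w.IsPath → ∀ k ∈ w.support, C i ∩ C j ⊆ C k)
    -- potentials and the individual model: the pmf factors over the cliques
    (φ : (i : ι) → ((C i) → 𝒳) → ENNReal)
    {N : ℕ} (hN : 0 < N) (X : Fin N → Ω → V → 𝒳)
    (hXmeas : ∀ m, Measurable (X m))
    (hlaw : ∀ m (x : V → 𝒳),
      (μ.map (X m)) {x} = ∏ i, φ i (fun v => x v))
    (hindep : iIndepFun X μ)
    -- the separator edge and the separated cliques
    (a b i₀ j₀ : ι) (hedge : T.Adj i₀ j₀)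
    (hsep : ∀ w : T.Walk a b, s(i₀, j₀) ∈ w.edges)
    (A B : Finset V) (hA : A ⊆ C a) (hB : B ⊆ C b) :
    ∀ (fa : (A → 𝒳) → ℕ) (fb : (B → 𝒳) → ℕ)
      (fs : ((C i₀ ∩ C j₀ : Finset V) → 𝒳) → ℕ),
      μ ({ω | cgmCount X A ω = fa} ∩ {ω | cgmCount X B ω = fb}
          ∩ {ω | cgmCount X (C i₀ ∩ C j₀) ω = fs})
        * μ {ω | cgmCount X (C i₀ ∩ C j₀) ω = fs}
      = μ ({ω | cgmCount X A ω = fa} ∩ {ω | cgmCount X (C i₀ ∩ C j₀) ω = fs})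
        * μ ({ω | cgmCount X B ω = fb} ∩ {ω | cgmCount X (C i₀ ∩ C j₀) ω = fs}) := by
  intro fa fb fs
  classical
  obtain ⟨U, Wt, f, g, hCaU, hCbW, hSU, hSW, hUWS, hUWuniv, hfact⟩ :=
    cgm_split T hT C hJT φ a b i₀ j₀ hedge hsep
  have hAU : A ⊆ U := hA.trans hCaU
  have hBW : B ⊆ Wt := hB.trans hCbW
  -- the weight of a single configuration
  have hw : ∀ (m : Fin N) (x : V → 𝒳),
      μ ((X m) ⁻¹' {x}) = f (cgmRes U x) * g (cgmRes Wt x) := by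
    intro m x
    rw [← Measure.map_apply (hXmeas m) (measurableSet_singleton _), hlaw m x, hfact x]
    rfl
  -- the four measures as sums
  have hm1 : μ ({ω | cgmCount X A ω = fa} ∩ {ω | cgmCount X B ω = fb}
      ∩ {ω | cgmCount X (C i₀ ∩ C j₀) ω = fs}) =
      ∑ y : Fin N → V → 𝒳,
        if cgmCnt (fun m => cgmRes A (y m)) = fa ∧ cgmCnt (fun m => cgmRes B (y m)) = fb
            ∧ cgmCnt (fun m => cgmRes (C i₀ ∩ C j₀) (y m)) = fs
        then ∏ m, (f (cgmRes U (y m)) * g (cgmRes Wt (y m))) else 0 := by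
    have h0 := cgm_meas_eq μ X hXmeas hindep
      (fun y => cgmCnt (fun m => cgmRes A (y m)) = fa ∧ cgmCnt (fun m => cgmRes B (y m)) = fb
            ∧ cgmCnt (fun m => cgmRes (C i₀ ∩ C j₀) (y m)) = fs)
    refine Eq.trans ?_ (Eq.trans h0 ?_)
    · congr 1
      ext ω
      simp only [Set.mem_inter_iff, Set.mem_setOf_eq, cgmCount_eq_cnt, and_assoc]
    · refine Finset.sum_congr rfl fun y _ => ?_
      split
      · exact Finset.prod_congr rfl fun m _ => hw m (y m)
      · rfl
  have hm2 : μ {ω | cgmCount X (C i₀ ∩ C j₀) ω = fs} =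
      ∑ y : Fin N → V → 𝒳,
        if cgmCnt (fun m => cgmRes (C i₀ ∩ C j₀) (y m)) = fs
        then ∏ m, (f (cgmRes U (y m)) * g (cgmRes Wt (y m))) else 0 := by
    have h0 := cgm_meas_eq μ X hXmeas hindep
      (fun y => cgmCnt (fun m => cgmRes (C i₀ ∩ C j₀) (y m)) = fs)
    refine Eq.trans ?_ (Eq.trans h0 ?_)
    · congr 1
      ext ω
      simp only [Set.mem_setOf_eq, cgmCount_eq_cnt]
    · refine Finset.sum_congr rfl fun y _ => ?_
      split
      · exact Finset.prod_congr rfl fun m _ => hw m (y m)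
      · rfl
  have hm3 : μ ({ω | cgmCount X A ω = fa} ∩ {ω | cgmCount X (C i₀ ∩ C j₀) ω = fs}) =
      ∑ y : Fin N → V → 𝒳,
        if cgmCnt (fun m => cgmRes A (y m)) = fa ∧ cgmCnt (fun m => cgmRes (C i₀ ∩ C j₀) (y m)) = fs
        then ∏ m, (f (cgmRes U (y m)) * g (cgmRes Wt (y m))) else 0 := by
    have h0 := cgm_meas_eq μ X hXmeas hindep
      (fun y => cgmCnt (fun m => cgmRes A (y m)) = fa ∧ cgmCnt (fun m => cgmRes (C i₀ ∩ C j₀) (y m)) = fs)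
    refine Eq.trans ?_ (Eq.trans h0 ?_)
    · congr 1
      ext ω
      simp only [Set.mem_inter_iff, Set.mem_setOf_eq, cgmCount_eq_cnt]
    · refine Finset.sum_congr rfl fun y _ => ?_
      split
      · exact Finset.prod_congr rfl fun m _ => hw m (y m)
      · rfl
  have hm4 : μ ({ω | cgmCount X B ω = fb} ∩ {ω | cgmCount X (C i₀ ∩ C j₀) ω = fs}) =
      ∑ y : Fin N → V → 𝒳,
        if cgmCnt (fun m => cgmRes B (y m)) = fb ∧ cgmCnt (fun m => cgmRes (C i₀ ∩ C j₀) (y m)) = fs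
        then ∏ m, (f (cgmRes U (y m)) * g (cgmRes Wt (y m))) else 0 := by
    have h0 := cgm_meas_eq μ X hXmeas hindep
      (fun y => cgmCnt (fun m => cgmRes B (y m)) = fb ∧ cgmCnt (fun m => cgmRes (C i₀ ∩ C j₀) (y m)) = fs)
    refine Eq.trans ?_ (Eq.trans h0 ?_)
    · congr 1
      ext ω
      simp only [Set.mem_inter_iff, Set.mem_setOf_eq, cgmCount_eq_cnt]
    · refine Finset.sum_congr rfl fun y _ => ?_
      split
      · exact Finset.prod_congr rfl fun m _ => hw m (y m)
      · rfl
  rw [hm1, hm2, hm3, hm4]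
  -- the involution on pairs of sample matrices
  set Θ : ((Fin N → V → 𝒳) × (Fin N → V → 𝒳)) → ((Fin N → V → 𝒳) × (Fin N → V → 𝒳)) :=
    fun p =>
      if cgmCnt (fun m => cgmRes (C i₀ ∩ C j₀) (p.1 m)) = cgmCnt (fun m => cgmRes (C i₀ ∩ C j₀) (p.2 m)) then
        (cgmGlue U (cgmSig (fun m => cgmRes (C i₀ ∩ C j₀) (p.1 m)) (fun m => cgmRes (C i₀ ∩ C j₀) (p.2 m)))⁻¹ p.1 p.2,
         cgmGlue U (cgmSig (fun m => cgmRes (C i₀ ∩ C j₀) (p.1 m)) (fun m => cgmRes (C i₀ ∩ C j₀) (p.2 m))) p.2 p.1)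
      else p with hΘ
  have hΘpos : ∀ (y y' : Fin N → V → 𝒳) (σ : Equiv.Perm (Fin N)),
      σ = cgmSig (fun m => cgmRes (C i₀ ∩ C j₀) (y m)) (fun m => cgmRes (C i₀ ∩ C j₀) (y' m)) →
      cgmCnt (fun m => cgmRes (C i₀ ∩ C j₀) (y m)) = cgmCnt (fun m => cgmRes (C i₀ ∩ C j₀) (y' m)) →
      Θ (y, y') = (cgmGlue U σ⁻¹ y y', cgmGlue U σ y' y) := by
    intro y y' σ hσ hc
    subst hσ
    rw [hΘ]
    exact if_pos hc
  have hΘneg : ∀ (y y' : Fin N → V → 𝒳),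
      ¬ (cgmCnt (fun m => cgmRes (C i₀ ∩ C j₀) (y m)) = cgmCnt (fun m => cgmRes (C i₀ ∩ C j₀) (y' m))) →
      Θ (y, y') = (y, y') := by
    intro y y' hc
    rw [hΘ]
    exact if_neg hc
  have hinv : ∀ p, Θ (Θ p) = p := by
    rintro ⟨y, y'⟩
    by_cases hc : cgmCnt (fun m => cgmRes (C i₀ ∩ C j₀) (y m)) = cgmCnt (fun m => cgmRes (C i₀ ∩ C j₀) (y' m))
    · rw [hΘpos y y' (cgmSig (fun m => cgmRes (C i₀ ∩ C j₀) (y m)) (fun m => cgmRes (C i₀ ∩ C j₀) (y' m))) rfl hc]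
      have hr1 : (fun m => cgmRes (C i₀ ∩ C j₀) (cgmGlue U (cgmSig (fun m => cgmRes (C i₀ ∩ C j₀) (y m)) (fun m => cgmRes (C i₀ ∩ C j₀) (y' m)))⁻¹ y y' m))
          = (fun m => cgmRes (C i₀ ∩ C j₀) (y m)) :=
        funext fun m => cgmRes_glue_left hSU _ y y' m
      have hr2 : (fun m => cgmRes (C i₀ ∩ C j₀) (cgmGlue U (cgmSig (fun m => cgmRes (C i₀ ∩ C j₀) (y m)) (fun m => cgmRes (C i₀ ∩ C j₀) (y' m))) y' y m))
          = (fun m => cgmRes (C i₀ ∩ C j₀) (y' m)) :=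
        funext fun m => cgmRes_glue_left hSU _ y' y m
      have hc2 : cgmCnt (fun m => cgmRes (C i₀ ∩ C j₀) (cgmGlue U (cgmSig (fun m => cgmRes (C i₀ ∩ C j₀) (y m)) (fun m => cgmRes (C i₀ ∩ C j₀) (y' m)))⁻¹ y y' m))
          = cgmCnt (fun m => cgmRes (C i₀ ∩ C j₀) (cgmGlue U (cgmSig (fun m => cgmRes (C i₀ ∩ C j₀) (y m)) (fun m => cgmRes (C i₀ ∩ C j₀) (y' m))) y' y m)) := by
        rw [hr1, hr2]; exact hc
      have hσ2 : (cgmSig (fun m => cgmRes (C i₀ ∩ C j₀) (y m)) (fun m => cgmRes (C i₀ ∩ C j₀) (y' m))) = cgmSig (fun m => cgmRes (C i₀ ∩ C j₀) (cgmGlue U (cgmSig (fun m => cgmRes (C i₀ ∩ C j₀) (y m)) (fun m => cgmRes (C i₀ ∩ C j₀) (y' m)))⁻¹ y y' m))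
          (fun m => cgmRes (C i₀ ∩ C j₀) (cgmGlue U (cgmSig (fun m => cgmRes (C i₀ ∩ C j₀) (y m)) (fun m => cgmRes (C i₀ ∩ C j₀) (y' m))) y' y m)) := by
        rw [hr1, hr2]
      rw [hΘpos _ _ _ hσ2 hc2]
      refine Prod.ext ?_ ?_
      · funext m v
        simp only [cgmGlue]
        by_cases hvU : v ∈ U <;> simp [hvU]
      · funext m v
        simp only [cgmGlue]
        by_cases hvU : v ∈ U <;> simp [hvU]
    · rw [hΘneg y y' hc, hΘneg y y' hc]
  refine cgm_sum_mul_sum_eq _ _ _ _ Θ hinv ?_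
  rintro ⟨y, y'⟩
  dsimp only
  by_cases hc : cgmCnt (fun m => cgmRes (C i₀ ∩ C j₀) (y m)) = cgmCnt (fun m => cgmRes (C i₀ ∩ C j₀) (y' m))
  · rw [hΘpos y y' (cgmSig (fun m => cgmRes (C i₀ ∩ C j₀) (y m)) (fun m => cgmRes (C i₀ ∩ C j₀) (y' m))) rfl hc]
    dsimp only
    have hag1 : ∀ m, ∀ v ∈ (C i₀ ∩ C j₀), y m v = y' ((cgmSig (fun m => cgmRes (C i₀ ∩ C j₀) (y m)) (fun m => cgmRes (C i₀ ∩ C j₀) (y' m)))⁻¹ m) v := by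
      intro m v hv
      have h5 : y ((cgmSig (fun m => cgmRes (C i₀ ∩ C j₀) (y m)) (fun m => cgmRes (C i₀ ∩ C j₀) (y' m))) ((cgmSig (fun m => cgmRes (C i₀ ∩ C j₀) (y m)) (fun m => cgmRes (C i₀ ∩ C j₀) (y' m)))⁻¹ m)) v = y' ((cgmSig (fun m => cgmRes (C i₀ ∩ C j₀) (y m)) (fun m => cgmRes (C i₀ ∩ C j₀) (y' m)))⁻¹ m) v :=
        congrFun (cgmSig_spec hc ((cgmSig (fun m => cgmRes (C i₀ ∩ C j₀) (y m)) (fun m => cgmRes (C i₀ ∩ C j₀) (y' m)))⁻¹ m)) ⟨v, hv⟩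
      rwa [← Equiv.Perm.mul_apply, mul_inv_cancel, Equiv.Perm.one_apply] at h5
    have hag2 : ∀ m, ∀ v ∈ (C i₀ ∩ C j₀), y' m v = y ((cgmSig (fun m => cgmRes (C i₀ ∩ C j₀) (y m)) (fun m => cgmRes (C i₀ ∩ C j₀) (y' m))) m) v := fun m v hv =>
      (congrFun (cgmSig_spec hc m) ⟨v, hv⟩ : y ((cgmSig (fun m => cgmRes (C i₀ ∩ C j₀) (y m)) (fun m => cgmRes (C i₀ ∩ C j₀) (y' m))) m) v = y' m v).symm
    have hA1 : (fun m => cgmRes A (cgmGlue U (cgmSig (fun m => cgmRes (C i₀ ∩ C j₀) (y m)) (fun m => cgmRes (C i₀ ∩ C j₀) (y' m)))⁻¹ y y' m)) = (fun m => cgmRes A (y m)) :=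
      funext fun m => cgmRes_glue_left hAU _ y y' m
    have hS1 : (fun m => cgmRes (C i₀ ∩ C j₀) (cgmGlue U (cgmSig (fun m => cgmRes (C i₀ ∩ C j₀) (y m)) (fun m => cgmRes (C i₀ ∩ C j₀) (y' m)))⁻¹ y y' m))
        = (fun m => cgmRes (C i₀ ∩ C j₀) (y m)) :=
      funext fun m => cgmRes_glue_left hSU _ y y' m
    have hS2 : (fun m => cgmRes (C i₀ ∩ C j₀) (cgmGlue U (cgmSig (fun m => cgmRes (C i₀ ∩ C j₀) (y m)) (fun m => cgmRes (C i₀ ∩ C j₀) (y' m))) y' y m))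
        = (fun m => cgmRes (C i₀ ∩ C j₀) (y' m)) :=
      funext fun m => cgmRes_glue_left hSU _ y' y m
    have hB1 : cgmCnt (fun m => cgmRes B (cgmGlue U (cgmSig (fun m => cgmRes (C i₀ ∩ C j₀) (y m)) (fun m => cgmRes (C i₀ ∩ C j₀) (y' m)))⁻¹ y y' m))
        = cgmCnt (fun m => cgmRes B (y' m)) := by
      have hB1seq : (fun m => cgmRes B (cgmGlue U (cgmSig (fun m => cgmRes (C i₀ ∩ C j₀) (y m)) (fun m => cgmRes (C i₀ ∩ C j₀) (y' m)))⁻¹ y y' m))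
          = (fun m => cgmRes B (y' ((cgmSig (fun m => cgmRes (C i₀ ∩ C j₀) (y m)) (fun m => cgmRes (C i₀ ∩ C j₀) (y' m)))⁻¹ m))) :=
        funext fun m => cgmRes_glue_right hUWS hBW _ m (hag1 m)
      rw [hB1seq]
      exact (cgmCnt_comp_perm (cgmSig (fun m => cgmRes (C i₀ ∩ C j₀) (y m)) (fun m => cgmRes (C i₀ ∩ C j₀) (y' m)))⁻¹ (fun k => cgmRes B (y' k)) : _)
    have hwt1 : (∏ m, (f (cgmRes U (cgmGlue U (cgmSig (fun m => cgmRes (C i₀ ∩ C j₀) (y m)) (fun m => cgmRes (C i₀ ∩ C j₀) (y' m)))⁻¹ y y' m))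
          * g (cgmRes Wt (cgmGlue U (cgmSig (fun m => cgmRes (C i₀ ∩ C j₀) (y m)) (fun m => cgmRes (C i₀ ∩ C j₀) (y' m)))⁻¹ y y' m))))
        = (∏ m, f (cgmRes U (y m))) * (∏ m, g (cgmRes Wt (y' m))) := by
      rw [Finset.prod_mul_distrib]
      congr 1
      · exact Finset.prod_congr rfl fun m _ => by
          rw [cgmRes_glue_left (Finset.Subset.refl U) _ y y' m]
      · have e1 : (∏ m, g (cgmRes Wt (cgmGlue U (cgmSig (fun m => cgmRes (C i₀ ∩ C j₀) (y m)) (fun m => cgmRes (C i₀ ∩ C j₀) (y' m)))⁻¹ y y' m)))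
            = ∏ m, g (cgmRes Wt (y' ((cgmSig (fun m => cgmRes (C i₀ ∩ C j₀) (y m)) (fun m => cgmRes (C i₀ ∩ C j₀) (y' m)))⁻¹ m))) :=
          Finset.prod_congr rfl fun m _ => by
            rw [cgmRes_glue_right hUWS (Finset.Subset.refl Wt) _ m (hag1 m)]
        rw [e1]
        exact (Equiv.prod_comp (cgmSig (fun m => cgmRes (C i₀ ∩ C j₀) (y m)) (fun m => cgmRes (C i₀ ∩ C j₀) (y' m)))⁻¹ (fun k => g (cgmRes Wt (y' k))) : _)
    have hwt2 : (∏ m, (f (cgmRes U (cgmGlue U (cgmSig (fun m => cgmRes (C i₀ ∩ C j₀) (y m)) (fun m => cgmRes (C i₀ ∩ C j₀) (y' m))) y' y m))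
          * g (cgmRes Wt (cgmGlue U (cgmSig (fun m => cgmRes (C i₀ ∩ C j₀) (y m)) (fun m => cgmRes (C i₀ ∩ C j₀) (y' m))) y' y m))))
        = (∏ m, f (cgmRes U (y' m))) * (∏ m, g (cgmRes Wt (y m))) := by
      rw [Finset.prod_mul_distrib]
      congr 1
      · exact Finset.prod_congr rfl fun m _ => by
          rw [cgmRes_glue_left (Finset.Subset.refl U) _ y' y m]
      · have e1 : (∏ m, g (cgmRes Wt (cgmGlue U (cgmSig (fun m => cgmRes (C i₀ ∩ C j₀) (y m)) (fun m => cgmRes (C i₀ ∩ C j₀) (y' m))) y' y m)))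
            = ∏ m, g (cgmRes Wt (y ((cgmSig (fun m => cgmRes (C i₀ ∩ C j₀) (y m)) (fun m => cgmRes (C i₀ ∩ C j₀) (y' m))) m))) :=
          Finset.prod_congr rfl fun m _ => by
            rw [cgmRes_glue_right hUWS (Finset.Subset.refl Wt) _ m (hag2 m)]
        rw [e1]
        exact (Equiv.prod_comp (cgmSig (fun m => cgmRes (C i₀ ∩ C j₀) (y m)) (fun m => cgmRes (C i₀ ∩ C j₀) (y' m))) (fun k => g (cgmRes Wt (y k))) : _)
    rw [hA1, hS1, hS2, hB1, hwt1, hwt2]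
    rw [cgm_ite_mul1 (cgmCnt (fun m => cgmRes (C i₀ ∩ C j₀) (y' m)) = fs)]
    rw [cgm_ite_mul3 (cgmCnt (fun m => cgmRes A (y m)) = fa)
      (cgmCnt (fun m => cgmRes B (y' m)) = fb) (cgmCnt (fun m => cgmRes (C i₀ ∩ C j₀) (y m)) = fs)]
    rw [cgm_ite_mul2 (cgmCnt (fun m => cgmRes A (y m)) = fa)
      (cgmCnt (fun m => cgmRes (C i₀ ∩ C j₀) (y m)) = fs)]
    rw [cgm_ite_mul2 (cgmCnt (fun m => cgmRes B (y' m)) = fb)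
      (cgmCnt (fun m => cgmRes (C i₀ ∩ C j₀) (y' m)) = fs)]
    rw [Finset.prod_mul_distrib, Finset.prod_mul_distrib]
    ring
  · rw [hΘneg y y' hc]
    dsimp only
    by_cases h3 : cgmCnt (fun m => cgmRes (C i₀ ∩ C j₀) (y m)) = fs
    · by_cases h4 : cgmCnt (fun m => cgmRes (C i₀ ∩ C j₀) (y' m)) = fs
      · exact absurd (h3.trans h4.symm) hc
      · simp [h4]
    · simp [h3]
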